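/- arXiv:1906.10053 — 3 statements merged into one kernel-verified Lean document; each statement's English description precedes it below -/
import Mathlib

section
/- The forward-backward envelope φ_Γ is a real-valued, locally Lipschitz-continuous function on ℝ^{n_1}×⋯×ℝ^{n_N}, and φ_Γ(x) ≤ Φ(x) holds for every x. -/
open Filter Topology Metric Bornology Set
open scoped RealInnerProductSpace

noncomputable section

variable {N : ℕ} {E : Fin N → Type*}
  [∀ i, NormedAddCommGroup (E i)] [∀ i, InnerProductSpace ℝ (E i)]
  [∀ i, CompleteSpace (E i)]

/-- `F(x) = (1/N) ∑ᵢ fᵢ(xᵢ)`, the smooth separable part of the cost. -/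
def Fsum (f : ∀ i, E i → ℝ) (x : PiLp 2 E) : ℝ := (N : ℝ)⁻¹ * ∑ i, f i (x i)

/-- `Φ = F + G`, the total cost, extended-real-valued. -/
def Phi (f : ∀ i, E i → ℝ) (G : PiLp 2 E → EReal) (x : PiLp 2 E) : EReal :=
  ((Fsum f x : ℝ) : EReal) + G x

/-- The model `M(w,x) = F(x) + ⟨∇F(x),w-x⟩ + G(w) + ½‖w-x‖²_{Γ⁻¹}`, where `∇F(x)ᵢ = f'ᵢ(xᵢ)/N`
and `Γ = blockdiag(γ₁ I, …, γ_N I)`. -/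
def Mdl (f : ∀ i, E i → ℝ) (f' : ∀ i, E i → E i) (γ : Fin N → ℝ)
    (G : PiLp 2 E → EReal) (w x : PiLp 2 E) : EReal :=
  ((Fsum f x + (N : ℝ)⁻¹ * ∑ i, ⟪f' i (x i), w i - x i⟫
      + 2⁻¹ * ∑ i, (γ i)⁻¹ * ‖w i - x i‖ ^ 2 : ℝ) : EReal) + G w

/-- The forward-backward operator `T(x) = argmin_w M(w,x)`. -/
def Tmap (f : ∀ i, E i → ℝ) (f' : ∀ i, E i → E i) (γ : Fin N → ℝ)
    (G : PiLp 2 E → EReal) (x : PiLp 2 E) : Set (PiLp 2 E) :=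
  {z | ∀ w, Mdl f f' γ G z x ≤ Mdl f f' γ G w x}

/-- The `Γ⁻¹`-proximal mapping
`prox_G^{Γ⁻¹}(u) = argmin_w { G(w) + ½‖w-u‖²_{Γ⁻¹} }`. -/
def proxSet (γ : Fin N → ℝ) (G : PiLp 2 E → EReal) (u : PiLp 2 E) : Set (PiLp 2 E) :=
  {z | ∀ w, G z + ((2⁻¹ * ∑ i, (γ i)⁻¹ * ‖z i - u i‖ ^ 2 : ℝ) : EReal)
        ≤ G w + ((2⁻¹ * ∑ i, (γ i)⁻¹ * ‖w i - u i‖ ^ 2 : ℝ) : EReal)}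

/-- The forward (gradient) step `x - Γ∇F(x)`. -/
def fwd (f' : ∀ i, E i → E i) (γ : Fin N → ℝ) (x : PiLp 2 E) : PiLp 2 E :=
  WithLp.toLp 2 (fun i => x i - (γ i * (N : ℝ)⁻¹) • f' i (x i))

/-- Convexity for an extended-real-valued function. -/
def ERealConvex {X : Type*} [AddCommMonoid X] [Module ℝ X] (G : X → EReal) : Prop :=
  ∀ x y : X, ∀ a b : ℝ, 0 ≤ a → 0 ≤ b → a + b = 1 →
    G (a • x + b • y) ≤ (a : ℝ) * G x + (b : ℝ) * G y

/-- The regular (Fréchet) subdifferential `∂̂h(x)` of an extended-real-valued function. -/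
def frechetSubdiff {X : Type*} [NormedAddCommGroup X] [InnerProductSpace ℝ X]
    (h : X → EReal) (x : X) : Set X :=
  {v | h x ≠ ⊤ ∧ h x ≠ ⊥ ∧ ∀ ε : ℝ, 0 < ε →
      ∀ᶠ w in 𝓝 x, h x + ((⟪v, w - x⟫ - ε * ‖w - x‖ : ℝ) : EReal) ≤ h w}

/-- The limiting subdifferential `∂h(x)`. -/
def limitingSubdiff {X : Type*} [NormedAddCommGroup X] [InnerProductSpace ℝ X]
    (h : X → EReal) (x : X) : Set X :=
  {v | ∃ u w : ℕ → X, (∀ k, w k ∈ frechetSubdiff h (u k)) ∧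
      Tendsto u atTop (𝓝 x) ∧ Tendsto (fun k => h (u k)) atTop (𝓝 (h x)) ∧
      Tendsto w atTop (𝓝 v)}

/-- The Kurdyka-Łojasiewicz property with exponent `θ` (at every point of `dom ∂h`),
with desingularizing function `ψ(s) = ϱ s^{1-θ}`. -/
def HasKLExponent {X : Type*} [NormedAddCommGroup X] [InnerProductSpace ℝ X]
    (h : X → EReal) (θ : ℝ) : Prop :=
  ∀ xb : X, (limitingSubdiff h xb).Nonempty →
    ∃ ε η ϱ : ℝ, 0 < ε ∧ 0 < η ∧ 0 < ϱ ∧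
      ∀ w : X, ‖w - xb‖ < ε → h xb < h w → h w < h xb + ((η : ℝ) : EReal) →
        ∀ v ∈ limitingSubdiff h w,
          1 ≤ ϱ * (1 - θ) * (h w - h xb).toReal ^ (-θ) * ‖v‖

theorem my_descent {F : Type*} [NormedAddCommGroup F] [InnerProductSpace ℝ F]
    [CompleteSpace F]
    (f : F → ℝ) (f' : F → F) (L : ℝ)
    (hf : ∀ u, HasGradientAt f (f' u) u)
    (hlip : ∀ u v, ‖f' u - f' v‖ ≤ L * ‖u - v‖) (x w : F) :
    f w ≤ f x + ⟪f' x, w - x⟫ + L / 2 * ‖w - x‖ ^ 2 := by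
  set d := w - x with hd
  set g : ℝ → ℝ := fun t => f (x + t • d) - t * ⟪f' x, d⟫ - t ^ 2 * (L / 2) * ‖d‖ ^ 2 with hg
  have hderiv : ∀ t : ℝ, HasDerivAt g
      (⟪f' (x + t • d), d⟫ - ⟪f' x, d⟫ - t * L * ‖d‖ ^ 2) t := by
    intro t
    have hc : HasDerivAt (fun t : ℝ => x + t • d) d t := by
      simpa using ((hasDerivAt_id t).smul_const d).const_add x
    have h1 : HasDerivAt (fun t : ℝ => f (x + t • d)) ⟪f' (x + t • d), d⟫ t := by
      have := (hf (x + t • d)).hasFDerivAt.comp_hasDerivAt t hc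
      simp at this
      exact this
    have h2 : HasDerivAt (fun t : ℝ => t * ⟪f' x, d⟫) ⟪f' x, d⟫ t := by
      simpa using (hasDerivAt_id t).mul_const (⟪f' x, d⟫ : ℝ)
    have h3 : HasDerivAt (fun t : ℝ => t ^ 2 * (L / 2) * ‖d‖ ^ 2)
        (t * L * ‖d‖ ^ 2) t := by
      have h : HasDerivAt (fun t : ℝ => t ^ 2) (2 * t) t := by
        simpa using hasDerivAt_pow 2 t
      have := (h.mul_const (L / 2)).mul_const (‖d‖ ^ 2)
      have e : t * L * ‖d‖ ^ 2 = 2 * t * (L / 2) * ‖d‖ ^ 2 := by ring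
      rw [e]; exact this
    exact (h1.sub h2).sub h3
  have hanti : AntitoneOn g (Icc 0 1) := by
    apply antitoneOn_of_deriv_nonpos (convex_Icc 0 1)
    · exact fun t _ => (hderiv t).continuousAt.continuousWithinAt
    · exact fun t _ => ((hderiv t).differentiableAt).differentiableWithinAt
    · intro t ht
      rw [interior_Icc] at ht
      rw [(hderiv t).deriv]
      have h1 : ⟪f' (x + t • d) - f' x, d⟫ ≤ t * L * ‖d‖ ^ 2 := by
        calc ⟪f' (x + t • d) - f' x, d⟫ ≤ ‖f' (x + t • d) - f' x‖ * ‖d‖ :=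
              real_inner_le_norm _ _
          _ ≤ (L * ‖(x + t • d) - x‖) * ‖d‖ := by
              gcongr; exact hlip _ _
          _ = t * L * ‖d‖ ^ 2 := by
              rw [add_sub_cancel_left, norm_smul, Real.norm_eq_abs,
                abs_of_pos ht.1]; ring
      have h2 : ⟪f' (x + t • d) - f' x, d⟫ = ⟪f' (x + t • d), d⟫ - ⟪f' x, d⟫ :=
        inner_sub_left _ _ _
      linarith [h1, h2.symm.le]
  have key := hanti (Set.left_mem_Icc.2 zero_le_one) (Set.right_mem_Icc.2 zero_le_one)
    zero_le_one
  simp only [hg] at key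
  simp only [zero_smul, add_zero, one_smul, zero_mul, sub_zero, one_pow, one_mul,
    zero_pow] at key
  have hxw : x + d = w := by rw [hd]; abel
  rw [hxw] at key
  nlinarith [key]

theorem piLp_apply_norm_le {N : ℕ} {E : Fin N → Type*} [∀ i, NormedAddCommGroup (E i)]
    (x : PiLp 2 E) (i : Fin N) : ‖x i‖ ≤ ‖x‖ := by
  have h1 : ‖x i‖ ^ 2 ≤ ‖x‖ ^ 2 := by
    rw [PiLp.norm_sq_eq_of_L2 E x]
    exact Finset.single_le_sum (f := fun j => ‖x j‖ ^ 2)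
      (fun j _ => by positivity) (Finset.mem_univ i)
  have := Real.sqrt_le_sqrt h1
  rwa [Real.sqrt_sq (norm_nonneg _), Real.sqrt_sq (norm_nonneg _)] at this

theorem my_sqdiff {F : Type*} [NormedAddCommGroup F] [InnerProductSpace ℝ F] (a b : F) :
    ‖a‖ ^ 2 - ‖b‖ ^ 2 = ⟪a - b, a + b⟫ := by
  simp only [inner_sub_left, inner_add_right, real_inner_self_eq_norm_sq]
  rw [real_inner_comm b a]
  ring

theorem my_mvt {F : Type*} [NormedAddCommGroup F] [InnerProductSpace ℝ F]
    [CompleteSpace F]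
    (f : F → ℝ) (f' : F → F) {s : Set F} (hs : Convex ℝ s) {C : ℝ}
    (hf : ∀ u, HasGradientAt f (f' u) u)
    (bound : ∀ u ∈ s, ‖f' u‖ ≤ C) {x y : F} (hx : x ∈ s) (hy : y ∈ s) :
    |f y - f x| ≤ C * ‖y - x‖ := by
  have := Convex.norm_image_sub_le_of_norm_hasFDerivWithin_le
    (hs := hs) (f := f) (f' := fun u => (InnerProductSpace.toDual ℝ F) (f' u)) (s := s)
    (fun u _ => ((hf u).hasFDerivAt).hasFDerivWithinAt)
    (fun u hu => by simpa using bound u hu) hx hy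
  simpa [Real.norm_eq_abs] using this


set_option maxHeartbeats 1000000 in
/-- Lemma 2.3, first part: the forward-backward envelope φ_Γ is a
real-valued, locally Lipschitz continuous function, and φ_Γ ≤ Φ everywhere. -/
theorem fbe_realValued_locallyLipschitz_le_cost
    (f : ∀ i, E i → ℝ) (f' : ∀ i, E i → E i) (L γ : Fin N → ℝ)
    (G : PiLp 2 E → EReal)
    (hf : ∀ i (u : E i), HasGradientAt (f i) (f' i u) u)
    (hL : ∀ i, 0 ≤ L i)
    (hlip : ∀ i (u v : E i), ‖f' i u - f' i v‖ ≤ L i * ‖u - v‖)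
    (hγ : ∀ i, 0 < γ i) (hγL : ∀ i, γ i * L i < (N : ℝ))
    (hGlsc : LowerSemicontinuous G)
    (hGproper : ∃ w, G w ≠ ⊤) (hGbot : ∀ w, G w ≠ ⊥)
    (hargmin : ∃ xs : PiLp 2 E, ∀ w, Phi f G xs ≤ Phi f G w)
    :
    ∃ φ : PiLp 2 E → ℝ,
      (∀ x, ((φ x : ℝ) : EReal) = ⨅ w, Mdl f f' γ G w x) ∧
      LocallyLipschitz φ ∧
      (∀ x, ((φ x : ℝ) : EReal) ≤ Phi f G x) := by
  classical
  obtain ⟨w0, hw0⟩ := hGproper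
  obtain ⟨xs, hxs⟩ := hargmin
  -- the real-valued part of the model
  set m : PiLp 2 E → PiLp 2 E → ℝ := fun w x =>
    Fsum f x + (N : ℝ)⁻¹ * ∑ i, ⟪f' i (x i), w i - x i⟫
      + 2⁻¹ * ∑ i, (γ i)⁻¹ * ‖w i - x i‖ ^ 2 with hm
  have hMdl : ∀ w x, Mdl f f' γ G w x = ((m w x : ℝ) : EReal) + G w := fun _ _ => rfl
  have hNinv : (0 : ℝ) ≤ (N : ℝ)⁻¹ := by positivity
  set c : Fin N → ℝ := fun i => 2⁻¹ * (γ i)⁻¹ - (N : ℝ)⁻¹ * (L i / 2) with hcdef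
  have hc : ∀ i, 0 < c i := by
    intro i
    have hN : (0 : ℝ) < N := by exact_mod_cast i.pos
    have h1 : γ i * L i < N := hγL i
    have e1 : (N : ℝ) * (N : ℝ)⁻¹ = 1 := mul_inv_cancel₀ hN.ne'
    have e2 : γ i * (γ i)⁻¹ = 1 := mul_inv_cancel₀ (hγ i).ne'
    rw [hcdef]
    have hγi := hγ i
    nlinarith [mul_pos hN hγi, inv_nonneg.mpr hN.le, inv_nonneg.mpr hγi.le]
  have hcnn : ∀ w x : PiLp 2 E, (0:ℝ) ≤ ∑ i, c i * ‖w i - x i‖ ^ 2 := fun w x =>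
    Finset.sum_nonneg fun i _ => mul_nonneg (hc i).le (by positivity)
  -- block decomposition of m
  have hmsum : ∀ w x, m w x = ∑ i, ((N : ℝ)⁻¹ * f i (x i)
      + (N : ℝ)⁻¹ * ⟪f' i (x i), w i - x i⟫
      + 2⁻¹ * ((γ i)⁻¹ * ‖w i - x i‖ ^ 2)) := by
    intro w x
    simp only [hm, Fsum, Finset.mul_sum, Finset.sum_add_distrib]
  -- key inequality (B): descent lemma summed up
  have hB : ∀ w x : PiLp 2 E, Fsum f w + ∑ i, c i * ‖w i - x i‖ ^ 2 ≤ m w x := by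
    intro w x
    have key : ∀ i, (N : ℝ)⁻¹ * f i (w i) + c i * ‖w i - x i‖ ^ 2 ≤
        (N : ℝ)⁻¹ * f i (x i) + (N : ℝ)⁻¹ * ⟪f' i (x i), w i - x i⟫
          + 2⁻¹ * ((γ i)⁻¹ * ‖w i - x i‖ ^ 2) := by
      intro i
      have h := my_descent (f i) (f' i) (L i) (hf i) (hlip i) (x i) (w i)
      have h2 := mul_le_mul_of_nonneg_left h hNinv
      rw [hcdef]
      nlinarith [h2]
    have lhs : Fsum f w + ∑ i, c i * ‖w i - x i‖ ^ 2
        = ∑ i, ((N : ℝ)⁻¹ * f i (w i) + c i * ‖w i - x i‖ ^ 2) := by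
      simp only [Fsum, Finset.mul_sum, Finset.sum_add_distrib]
    rw [lhs, hmsum w x]
    exact Finset.sum_le_sum fun i _ => key i
  -- the optimal value is real
  have hPhi_le : ∀ w, Phi f G xs ≤ ((Fsum f w : ℝ) : EReal) + G w := fun w => hxs w
  have hgw0 : G w0 = (((G w0).toReal : ℝ) : EReal) := (EReal.coe_toReal hw0 (hGbot w0)).symm
  have hPhixs_top : Phi f G xs ≠ ⊤ := by
    have h1 : Phi f G xs ≤ ((Fsum f w0 + (G w0).toReal : ℝ) : EReal) := by
      rw [EReal.coe_add, ← hgw0]; exact hPhi_le w0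
    exact ne_top_of_le_ne_top (EReal.coe_ne_top _) h1
  have hPhixs_bot : Phi f G xs ≠ ⊥ := by
    rw [Phi, Ne, EReal.add_eq_bot_iff]
    push_neg
    exact ⟨EReal.coe_ne_bot _, hGbot xs⟩
  set Φs : ℝ := (Phi f G xs).toReal with hΦsdef
  have hΦs : ((Φs : ℝ) : EReal) = Phi f G xs := EReal.coe_toReal hPhixs_top hPhixs_bot
  -- key inequality (C)
  have hC : ∀ w x : PiLp 2 E, G w ≠ ⊤ →
      Φs + ∑ i, c i * ‖w i - x i‖ ^ 2 ≤ m w x + (G w).toReal := by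
    intro w x hw
    have hgw : G w = (((G w).toReal : ℝ) : EReal) := (EReal.coe_toReal hw (hGbot w)).symm
    have h1 : Φs ≤ Fsum f w + (G w).toReal := by
      have h := hPhi_le w
      rw [← hΦs, hgw, ← EReal.coe_add, EReal.coe_le_coe_iff] at h
      exact h
    linarith [hB w x]
  -- candidate sets and the envelope
  set S : PiLp 2 E → Set ℝ := fun x => (fun w => m w x + (G w).toReal) '' {w | G w ≠ ⊤}
    with hSdef
  have hSne : ∀ x, (S x).Nonempty := fun x => ⟨_, ⟨w0, hw0, rfl⟩⟩
  have hSlb : ∀ x, ∀ r ∈ S x, Φs ≤ r := by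
    rintro x r ⟨w, hw, rfl⟩
    have h1 := hC w x hw
    show Φs ≤ m w x + (G w).toReal
    linarith [hcnn w x]
  have hSbdd : ∀ x, BddBelow (S x) := fun x => ⟨Φs, fun r hr => hSlb x r hr⟩
  set φ : PiLp 2 E → ℝ := fun x => sInf (S x) with hφ
  have hφle : ∀ x w, G w ≠ ⊤ → φ x ≤ m w x + (G w).toReal := fun x w hw =>
    csInf_le (hSbdd x) ⟨w, hw, rfl⟩
  have hφlb : ∀ x, Φs ≤ φ x := fun x => le_csInf (hSne x) (hSlb x)
  -- the Mdl values
  have hMle : ∀ w x, G w ≠ ⊤ →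
      Mdl f f' γ G w x = ((m w x + (G w).toReal : ℝ) : EReal) := by
    intro w x hw
    rw [hMdl w x, EReal.coe_add (m w x) ((G w).toReal), EReal.coe_toReal hw (hGbot w)]
  have hub : ∀ x w, ((φ x : ℝ) : EReal) ≤ Mdl f f' γ G w x := by
    intro x w
    by_cases hw : G w = ⊤
    · rw [hMdl w x, hw, EReal.coe_add_top]; exact le_top
    · rw [hMle w x hw]
      exact EReal.coe_le_coe_iff.mpr (hφle x w hw)
  -- statement 1: φ is the infimum
  have hkey : ∀ x, ((φ x : ℝ) : EReal) = ⨅ w, Mdl f f' γ G w x := by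
    intro x
    refine le_antisymm (le_iInf (hub x)) ?_
    set a : EReal := ⨅ w, Mdl f f' γ G w x with ha
    have halb : ((Φs : ℝ) : EReal) ≤ a := by
      refine le_iInf fun w => ?_
      by_cases hw : G w = ⊤
      · rw [hMdl w x, hw, EReal.coe_add_top]; exact le_top
      · rw [hMle w x hw]
        exact EReal.coe_le_coe_iff.mpr (hSlb x _ ⟨w, hw, rfl⟩)
    have haub : a ≤ ((m w0 x + (G w0).toReal : ℝ) : EReal) := by
      rw [← hMle w0 x hw0]; exact iInf_le _ w0
    have hat : a ≠ ⊤ := ne_top_of_le_ne_top (EReal.coe_ne_top _) haub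
    have hab : a ≠ ⊥ := by
      intro h
      exact (EReal.bot_lt_coe Φs).not_ge (h ▸ halb)
    have hcoe : ((a.toReal : ℝ) : EReal) = a := EReal.coe_toReal hat hab
    rw [← hcoe]
    apply EReal.coe_le_coe_iff.mpr
    apply le_csInf (hSne x)
    rintro r ⟨w, hw, rfl⟩
    have h3 : a ≤ ((m w x + (G w).toReal : ℝ) : EReal) := by
      rw [← hMle w x hw]; exact iInf_le _ w
    rw [← hcoe] at h3
    exact EReal.coe_le_coe_iff.mp h3
  -- statement 3: φ ≤ Φ
  have hle : ∀ x, ((φ x : ℝ) : EReal) ≤ Phi f G x := by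
    intro x
    have h := hub x x
    have hxx : Mdl f f' γ G x x = Phi f G x := by
      rw [hMdl x x, Phi]
      congr 2
      simp [hm]
    rwa [hxx] at h
  refine ⟨φ, hkey, ?_, hle⟩
  -- statement 2: local Lipschitz continuity
  intro x0
  set A : Fin N → ℝ := fun i => ‖f' i (x0 i)‖ + L i with hA
  have hAnn : ∀ i, 0 ≤ A i := fun i => add_nonneg (norm_nonneg _) (hL i)
  have hA' : ∀ i (u : E i), ‖u - x0 i‖ ≤ 1 → ‖f' i u‖ ≤ A i := by
    intro i u hu
    have h1 : ‖f' i u‖ ≤ ‖f' i (x0 i)‖ + ‖f' i u - f' i (x0 i)‖ := by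
      calc ‖f' i u‖ = ‖f' i (x0 i) + (f' i u - f' i (x0 i))‖ := by rw [add_sub_cancel]
        _ ≤ ‖f' i (x0 i)‖ + ‖f' i u - f' i (x0 i)‖ := norm_add_le _ _
    have h2 : ‖f' i u - f' i (x0 i)‖ ≤ L i * ‖u - x0 i‖ := hlip i _ _
    have h3 : L i * ‖u - x0 i‖ ≤ L i := by
      have := mul_le_of_le_one_right (hL i) hu
      simpa using this
    rw [hA]; dsimp only; linarith
  set s : Set (PiLp 2 E) := closedBall x0 1 with hs
  have hsx : ∀ x ∈ s, ∀ i, ‖x i - x0 i‖ ≤ 1 := by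
    intro x hx i
    have h1 : ‖x i - x0 i‖ ≤ ‖x - x0‖ := by
      have := piLp_apply_norm_le (x - x0) i
      simpa using this
    have h2 : ‖x - x0‖ ≤ 1 := by
      rw [← dist_eq_norm]; exact mem_closedBall.mp hx
    linarith
  have hflip : ∀ i (u v : E i), ‖u - x0 i‖ ≤ 1 → ‖v - x0 i‖ ≤ 1 →
      |f i u - f i v| ≤ A i * ‖u - v‖ := by
    intro i u v hu hv
    exact my_mvt (f i) (f' i) (convex_closedBall (x0 i) 1) (hf i)
      (fun z hz => hA' i z (by simpa [dist_eq_norm] using hz))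
      (by simpa [mem_closedBall, dist_eq_norm] using hv)
      (by simpa [mem_closedBall, dist_eq_norm] using hu)
  set Bc : Fin N → ℝ := fun i => ‖w0 i - x0 i‖ + 1 with hBc
  have hBnn : ∀ i, 0 ≤ Bc i := fun i => add_nonneg (norm_nonneg _) zero_le_one
  have hB' : ∀ x ∈ s, ∀ i, ‖w0 i - x i‖ ≤ Bc i := by
    intro x hx i
    calc ‖w0 i - x i‖ ≤ ‖w0 i - x0 i‖ + ‖x0 i - x i‖ := by
          have := dist_triangle (w0 i) (x0 i) (x i)
          simpa [dist_eq_norm] using this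
      _ ≤ Bc i := by
          rw [hBc]; dsimp only
          have : ‖x0 i - x i‖ = ‖x i - x0 i‖ := norm_sub_rev _ _
          linarith [hsx x hx i]
  set C0 : ℝ := (N : ℝ)⁻¹ * ∑ i, (f i (x0 i) + A i)
    + ((N : ℝ)⁻¹ * ∑ i, A i * Bc i + 2⁻¹ * ∑ i, (γ i)⁻¹ * Bc i ^ 2) + (G w0).toReal
    with hC0
  have hφub : ∀ x ∈ s, φ x ≤ C0 := by
    intro x hx
    have h1 := hφle x w0 hw0
    have hb1 : Fsum f x ≤ (N : ℝ)⁻¹ * ∑ i, (f i (x0 i) + A i) := by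
      rw [Fsum]
      apply mul_le_mul_of_nonneg_left _ hNinv
      apply Finset.sum_le_sum
      intro i _
      have h := hflip i (x i) (x0 i) (hsx x hx i) (by simp)
      have h2 : f i (x i) - f i (x0 i) ≤ A i * ‖x i - x0 i‖ := (le_abs_self _).trans h
      have h3 : A i * ‖x i - x0 i‖ ≤ A i := by
        have := mul_le_of_le_one_right (hAnn i) (hsx x hx i)
        simpa using this
      linarith
    have hb2 : ∑ i, ⟪f' i (x i), w0 i - x i⟫ ≤ ∑ i, A i * Bc i := by
      apply Finset.sum_le_sum
      intro i _
      calc ⟪f' i (x i), w0 i - x i⟫ ≤ ‖f' i (x i)‖ * ‖w0 i - x i‖ := real_inner_le_norm _ _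
        _ ≤ A i * Bc i := by
            apply mul_le_mul (hA' i (x i) (hsx x hx i)) (hB' x hx i) (norm_nonneg _) (hAnn i)
    have hb3 : ∑ i, (γ i)⁻¹ * ‖w0 i - x i‖ ^ 2 ≤ ∑ i, (γ i)⁻¹ * Bc i ^ 2 := by
      apply Finset.sum_le_sum
      intro i _
      have hγi : (0:ℝ) ≤ (γ i)⁻¹ := (inv_nonneg.mpr (hγ i).le)
      apply mul_le_mul_of_nonneg_left _ hγi
      exact pow_le_pow_left₀ (norm_nonneg _) (hB' x hx i) 2
    have hmle : m w0 x ≤ C0 - (G w0).toReal := by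
      rw [hm, hC0]
      dsimp only
      have h2 := mul_le_mul_of_nonneg_left hb2 hNinv
      have h3 := mul_le_mul_of_nonneg_left hb3 (by norm_num : (0:ℝ) ≤ 2⁻¹)
      linarith
    linarith
  set R : Fin N → ℝ := fun i => Real.sqrt ((C0 + 1 - Φs) / c i) + 1 with hR
  have hRnn : ∀ i, 0 ≤ R i := fun i => by positivity
  have hrad : ∀ x ∈ s, ∀ w, G w ≠ ⊤ → m w x + (G w).toReal ≤ C0 + 1 →
      ∀ i, ‖w i - x0 i‖ ≤ R i := by
    intro x hx w hw hle' i
    have h1 := hC w x hw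
    have h2 : c i * ‖w i - x i‖ ^ 2 ≤ C0 + 1 - Φs := by
      have hnn : ∀ j ∈ Finset.univ, (0:ℝ) ≤ c j * ‖w j - x j‖ ^ 2 :=
        fun j _ => mul_nonneg (hc j).le (by positivity)
      have := Finset.single_le_sum hnn (Finset.mem_univ i)
      linarith
    have h3 : ‖w i - x i‖ ^ 2 ≤ (C0 + 1 - Φs) / c i := by
      rw [le_div_iff₀ (hc i)]
      linarith [h2, mul_comm (c i) (‖w i - x i‖ ^ 2)]
    have h4 : ‖w i - x i‖ ≤ Real.sqrt ((C0 + 1 - Φs) / c i) := by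
      have := Real.sqrt_le_sqrt h3
      rwa [Real.sqrt_sq (norm_nonneg _)] at this
    calc ‖w i - x0 i‖ ≤ ‖w i - x i‖ + ‖x i - x0 i‖ := by
          have := dist_triangle (w i) (x i) (x0 i)
          simpa [dist_eq_norm] using this
      _ ≤ Real.sqrt ((C0 + 1 - Φs) / c i) + 1 := add_le_add h4 (hsx x hx i)
      _ = R i := by rw [hR]
  set D : Fin N → ℝ := fun i => R i + 1 with hD
  have hDnn : ∀ i, 0 ≤ D i := fun i => by have := hRnn i; rw [hD]; dsimp only; linarith
  have hD' : ∀ x ∈ s, ∀ w : PiLp 2 E, (∀ i, ‖w i - x0 i‖ ≤ R i) →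
      ∀ i, ‖w i - x i‖ ≤ D i := by
    intro x hx w hwR i
    calc ‖w i - x i‖ ≤ ‖w i - x0 i‖ + ‖x0 i - x i‖ := by
          have := dist_triangle (w i) (x0 i) (x i)
          simpa [dist_eq_norm] using this
      _ ≤ R i + 1 := by
          have : ‖x0 i - x i‖ = ‖x i - x0 i‖ := norm_sub_rev _ _
          linarith [hwR i, hsx x hx i]
      _ = D i := by rw [hD]
  set K : ℝ := ∑ i, ((N : ℝ)⁻¹ * (2 * A i + L i * D i) + (γ i)⁻¹ * D i) with hK
  have hKinn : ∀ i, 0 ≤ (N : ℝ)⁻¹ * (2 * A i + L i * D i) + (γ i)⁻¹ * D i := by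
    intro i
    have := hAnn i; have := hDnn i; have := hL i
    have h1 : (0:ℝ) ≤ 2 * A i + L i * D i := by positivity
    have h2 : (0:ℝ) ≤ (γ i)⁻¹ * D i := mul_nonneg (inv_nonneg.mpr (hγ i).le) (hDnn i)
    nlinarith [mul_nonneg hNinv h1]
  have hKnn : 0 ≤ K := Finset.sum_nonneg fun i _ => hKinn i
  have hKlip : ∀ x ∈ s, ∀ y ∈ s, ∀ w : PiLp 2 E, (∀ i, ‖w i - x0 i‖ ≤ R i) →
      m w x - m w y ≤ K * ‖x - y‖ := by
    intro x hx y hy w hwR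
    have key : ∀ i, ((N : ℝ)⁻¹ * f i (x i) + (N : ℝ)⁻¹ * ⟪f' i (x i), w i - x i⟫
        + 2⁻¹ * ((γ i)⁻¹ * ‖w i - x i‖ ^ 2))
        - ((N : ℝ)⁻¹ * f i (y i) + (N : ℝ)⁻¹ * ⟪f' i (y i), w i - y i⟫
        + 2⁻¹ * ((γ i)⁻¹ * ‖w i - y i‖ ^ 2))
        ≤ ((N : ℝ)⁻¹ * (2 * A i + L i * D i) + (γ i)⁻¹ * D i) * ‖x i - y i‖ := by
      intro i
      have e1 : f i (x i) - f i (y i) ≤ A i * ‖x i - y i‖ :=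
        (le_abs_self _).trans (hflip i (x i) (y i) (hsx x hx i) (hsx y hy i))
      have e2 : ⟪f' i (x i), w i - x i⟫ - ⟪f' i (y i), w i - y i⟫
          ≤ (L i * D i + A i) * ‖x i - y i‖ := by
        have split : ⟪f' i (x i), w i - x i⟫ - ⟪f' i (y i), w i - y i⟫
            = ⟪f' i (x i) - f' i (y i), w i - x i⟫ + ⟪f' i (y i), y i - x i⟫ := by
          simp only [inner_sub_left, inner_sub_right]
          ring
        have t1 : ⟪f' i (x i) - f' i (y i), w i - x i⟫ ≤ (L i * ‖x i - y i‖) * D i := by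
          calc ⟪f' i (x i) - f' i (y i), w i - x i⟫
              ≤ ‖f' i (x i) - f' i (y i)‖ * ‖w i - x i‖ := real_inner_le_norm _ _
            _ ≤ (L i * ‖x i - y i‖) * D i := by
                apply mul_le_mul (hlip i _ _) (hD' x hx w hwR i) (norm_nonneg _)
                exact mul_nonneg (hL i) (norm_nonneg _)
        have t2 : ⟪f' i (y i), y i - x i⟫ ≤ A i * ‖x i - y i‖ := by
          calc ⟪f' i (y i), y i - x i⟫ ≤ ‖f' i (y i)‖ * ‖y i - x i‖ := real_inner_le_norm _ _
            _ ≤ A i * ‖x i - y i‖ := by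
                rw [norm_sub_rev]
                exact mul_le_mul_of_nonneg_right (hA' i (y i) (hsx y hy i)) (norm_nonneg _)
        rw [split]
        nlinarith [t1, t2]
      have e3 : (γ i)⁻¹ * ‖w i - x i‖ ^ 2 - (γ i)⁻¹ * ‖w i - y i‖ ^ 2
          ≤ (γ i)⁻¹ * (2 * D i) * ‖x i - y i‖ := by
        have hid : ‖w i - x i‖ ^ 2 - ‖w i - y i‖ ^ 2
            = ⟪(w i - x i) - (w i - y i), (w i - x i) + (w i - y i)⟫ :=
          my_sqdiff _ _
        have hb : ⟪(w i - x i) - (w i - y i), (w i - x i) + (w i - y i)⟫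
            ≤ ‖x i - y i‖ * (2 * D i) := by
          calc ⟪(w i - x i) - (w i - y i), (w i - x i) + (w i - y i)⟫
              ≤ ‖(w i - x i) - (w i - y i)‖ * ‖(w i - x i) + (w i - y i)‖ :=
                real_inner_le_norm _ _
            _ ≤ ‖x i - y i‖ * (2 * D i) := by
                apply mul_le_mul
                · have hsub : (w i - x i) - (w i - y i) = y i - x i := by abel
                  rw [hsub, norm_sub_rev]
                · calc ‖(w i - x i) + (w i - y i)‖ ≤ ‖w i - x i‖ + ‖w i - y i‖ :=
                      norm_add_le _ _
                    _ ≤ 2 * D i := by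
                        have h1 := hD' x hx w hwR i
                        have h2 := hD' y hy w hwR i
                        linarith
                · exact norm_nonneg _
                · exact norm_nonneg _
        have hγi : (0:ℝ) ≤ (γ i)⁻¹ := inv_nonneg.mpr (hγ i).le
        have := mul_le_mul_of_nonneg_left (hid ▸ hb) hγi
        nlinarith [this]
      nlinarith [mul_le_mul_of_nonneg_left e1 hNinv, mul_le_mul_of_nonneg_left e2 hNinv, e3]
    have hsum : m w x - m w y ≤ ∑ i,
        (((N : ℝ)⁻¹ * (2 * A i + L i * D i) + (γ i)⁻¹ * D i) * ‖x i - y i‖) := by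
      rw [hmsum w x, hmsum w y, ← Finset.sum_sub_distrib]
      exact Finset.sum_le_sum fun i _ => key i
    have hsum2 : ∑ i, (((N : ℝ)⁻¹ * (2 * A i + L i * D i) + (γ i)⁻¹ * D i) * ‖x i - y i‖)
        ≤ K * ‖x - y‖ := by
      rw [hK, Finset.sum_mul]
      apply Finset.sum_le_sum
      intro i _
      apply mul_le_mul_of_nonneg_left _ (hKinn i)
      have := piLp_apply_norm_le (x - y) i
      simpa using this
    exact hsum.trans hsum2
  -- φ is K-Lipschitz on s
  have hlipφ : ∀ x ∈ s, ∀ y ∈ s, φ x - φ y ≤ K * ‖x - y‖ := by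
    intro x hx y hy
    have hall : ∀ ε, 0 < ε → φ x ≤ (φ y + K * ‖x - y‖) + ε := by
      intro ε hε
      set δ := min ε 1 with hδdef
      have hδ : 0 < δ := lt_min hε one_pos
      obtain ⟨r, hrS, hrlt⟩ := Real.lt_sInf_add_pos (hSne y) hδ
      obtain ⟨w, hw, rfl⟩ := hrS
      have hw' : G w ≠ ⊤ := hw
      have hrlt' : m w y + (G w).toReal < φ y + δ := hrlt
      have hδ1 : δ ≤ 1 := min_le_right _ _
      have hδε : δ ≤ ε := min_le_left _ _
      have h1 : m w y + (G w).toReal ≤ C0 + 1 := by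
        linarith [hrlt', hφub y hy]
      have h2 := hrad y hy w hw' h1
      have h3 := hφle x w hw'
      have h4 := hKlip x hx y hy w h2
      linarith [hrlt']
    have := le_of_forall_pos_le_add hall
    linarith
  exact ⟨K.toNNReal, s, closedBall_mem_nhds x0 one_pos, by
    rw [lipschitzOnWith_iff_dist_le_mul]
    intro x hx y hy
    have h1 := hlipφ x hx y hy
    have h2 := hlipφ y hy x hx
    rw [norm_sub_rev] at h2
    rw [Real.dist_eq, dist_eq_norm]
    have habs : |φ x - φ y| ≤ K * ‖x - y‖ := abs_le.mpr ⟨by linarith, h1⟩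
    calc |φ x - φ y| ≤ K * ‖x - y‖ := habs
      _ ≤ (K.toNNReal : ℝ) * ‖x - y‖ := by
          apply mul_le_mul_of_nonneg_right _ (norm_nonneg _)
          rw [Real.coe_toNNReal']
          exact le_max_left _ _⟩
end
end

section
/- For every x∈ℝ^{n_1}×⋯×ℝ^{n_N} and every z∈T(x), one has ½‖z−x‖²_{Γ^{-1}−Λ_F} ≤ φ_Γ(x) − Φ(z) ≤ ½‖z−x‖²_{Γ^{-1}+Λ_F}, where Λ_F=(1/N)·blockdiag(L_{f_1}I_{n_1},…,L_{f_N}I_{n_N}). -/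
open Filter Topology Metric Bornology Set
open scoped RealInnerProductSpace

noncomputable section

variable {N : ℕ} {E : Fin N → Type*}
  [∀ i, NormedAddCommGroup (E i)] [∀ i, InnerProductSpace ℝ (E i)]
  [∀ i, CompleteSpace (E i)]

open intervalIntegral in
lemma descent_lemma {F : Type*} [NormedAddCommGroup F] [InnerProductSpace ℝ F] [CompleteSpace F]
    (f : F → ℝ) (f' : F → F) (L : ℝ) (hL : 0 ≤ L)
    (hf : ∀ u, HasGradientAt f (f' u) u)
    (hlip : ∀ u v, ‖f' u - f' v‖ ≤ L * ‖u - v‖)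
    (x z : F) :
    |f z - f x - ⟪f' x, z - x⟫| ≤ L / 2 * ‖z - x‖ ^ 2 := by
  set v := z - x with hv
  have hcont : Continuous f' := by
    have : LipschitzWith ⟨L, hL⟩ f' :=
      LipschitzWith.of_dist_le_mul (fun u w => by
        rw [dist_eq_norm, dist_eq_norm]; exact hlip u w)
    exact this.continuous
  have hline : ∀ t : ℝ, HasDerivAt (fun s : ℝ => x + s • v) v t := fun t =>
    by simpa using ((hasDerivAt_id t).smul_const v).const_add x
  have hg : ∀ t : ℝ, HasDerivAt (fun s => f (x + s • v))
      (⟪f' (x + t • v), v⟫) t := by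
    intro t
    have := (hf (x + t • v)).hasFDerivAt.comp_hasDerivAt t (hline t)
    simpa [InnerProductSpace.toDual_apply_apply, Function.comp_def] using this
  have hgcont : Continuous fun t : ℝ => ⟪f' (x + t • v), v⟫ := by
    exact (hcont.comp (by continuity)).inner continuous_const
  have hint : f (x + (1:ℝ) • v) - f (x + (0:ℝ) • v)
      = ∫ t in (0:ℝ)..1, ⟪f' (x + t • v), v⟫ := by
    rw [intervalIntegral.integral_eq_sub_of_hasDerivAt (fun t _ => hg t)
      (hgcont.intervalIntegrable 0 1)]
  have hz : x + (1:ℝ) • v = z := by simp [hv]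
  have h0 : x + (0:ℝ) • v = x := by simp
  rw [hz, h0] at hint
  have hsplit : f z - f x - ⟪f' x, v⟫
      = ∫ t in (0:ℝ)..1, (⟪f' (x + t • v), v⟫ - ⟪f' x, v⟫) := by
    rw [intervalIntegral.integral_sub (hgcont.intervalIntegrable 0 1)
      (intervalIntegrable_const)]
    simp [← hint]
  rw [hsplit, ← Real.norm_eq_abs]
  have hbound : ∀ t ∈ Set.uIoc (0:ℝ) 1, |⟪f' (x + t • v), v⟫ - ⟪f' x, v⟫| ≤ L * ‖v‖ ^ 2 * t := by
    intro t ht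
    rw [Set.mem_uIoc] at ht
    have ht0 : 0 < t := by rcases ht with h | h; exact h.1; linarith [h.1, h.2]
    have : ⟪f' (x + t • v), v⟫ - ⟪f' x, v⟫ = ⟪f' (x + t • v) - f' x, v⟫ := by
      rw [inner_sub_left]
    rw [this]
    calc |⟪f' (x + t • v) - f' x, v⟫| ≤ ‖f' (x + t • v) - f' x‖ * ‖v‖ :=
          abs_real_inner_le_norm _ _
      _ ≤ (L * ‖x + t • v - x‖) * ‖v‖ := by
          gcongr; exact hlip _ _
      _ = L * ‖v‖ ^ 2 * t := by
          rw [add_sub_cancel_left, norm_smul, Real.norm_eq_abs, abs_of_pos ht0]; ring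
  calc ‖∫ t in (0:ℝ)..1, (⟪f' (x + t • v), v⟫ - ⟪f' x, v⟫)‖
      ≤ ∫ t in (0:ℝ)..1, L * ‖v‖ ^ 2 * t := by
        have h1 := intervalIntegral.norm_integral_le_of_norm_le (μ := MeasureTheory.volume)
          (a := 0) (b := 1) (f := fun t => ⟪f' (x + t • v), v⟫ - ⟪f' x, v⟫)
          (g := fun t => L * ‖v‖ ^ 2 * t) zero_le_one
          (by filter_upwards with t ht
              simpa using hbound t (by rw [Set.uIoc_of_le zero_le_one]; exact ht))
          ((continuous_const.mul continuous_id).intervalIntegrable 0 1)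
        exact h1
    _ = L / 2 * ‖v‖ ^ 2 := by
        rw [intervalIntegral.integral_const_mul]
        simp [integral_id]; ring


/-- Lemma 2.3(ii): for every x and every z ∈ T(x),
½‖z-x‖²_{Γ⁻¹-Λ_F} ≤ φ_Γ(x) - Φ(z) ≤ ½‖z-x‖²_{Γ⁻¹+Λ_F}, with Λ_F = (1/N)blockdiag(L_{f_i}I). -/
theorem fbe_sandwich_inequalities
    (f : ∀ i, E i → ℝ) (f' : ∀ i, E i → E i) (L γ : Fin N → ℝ)
    (G : PiLp 2 E → EReal)
    (hf : ∀ i (u : E i), HasGradientAt (f i) (f' i u) u)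
    (hL : ∀ i, 0 ≤ L i)
    (hlip : ∀ i (u v : E i), ‖f' i u - f' i v‖ ≤ L i * ‖u - v‖)
    (hγ : ∀ i, 0 < γ i) (hγL : ∀ i, γ i * L i < (N : ℝ))
    (hGlsc : LowerSemicontinuous G)
    (hGproper : ∃ w, G w ≠ ⊤) (hGbot : ∀ w, G w ≠ ⊥)
    (hargmin : ∃ xs : PiLp 2 E, ∀ w, Phi f G xs ≤ Phi f G w)
    (φ : PiLp 2 E → ℝ)
    (hφ : ∀ x, ((φ x : ℝ) : EReal) = ⨅ w, Mdl f f' γ G w x)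
    :
    ∀ x : PiLp 2 E, ∀ z ∈ Tmap f f' γ G x,
      Phi f G z + ((2⁻¹ * ∑ i, ((γ i)⁻¹ - L i / (N : ℝ)) * ‖z i - x i‖ ^ 2 : ℝ) : EReal)
          ≤ ((φ x : ℝ) : EReal) ∧
      ((φ x : ℝ) : EReal)
          ≤ Phi f G z + ((2⁻¹ * ∑ i, ((γ i)⁻¹ + L i / (N : ℝ)) * ‖z i - x i‖ ^ 2 : ℝ) : EReal) := by
  intro x z hz
  have hmin : ((φ x : ℝ) : EReal) = Mdl f f' γ G z x := by
    rw [hφ x]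
    exact le_antisymm (iInf_le _ z) (le_iInf hz)
  set m : ℝ := Fsum f x + (N : ℝ)⁻¹ * ∑ i, ⟪f' i (x i), z i - x i⟫
      + 2⁻¹ * ∑ i, (γ i)⁻¹ * ‖z i - x i‖ ^ 2 with hm
  have hMdl : Mdl f f' γ G z x = ((m : ℝ) : EReal) + G z := rfl
  have hgt : G z ≠ ⊤ := by
    intro h
    rw [hMdl, h, EReal.coe_add_top] at hmin
    exact EReal.coe_ne_top _ hmin
  set g : ℝ := (G z).toReal with hgdef
  have hg : G z = ((g : ℝ) : EReal) := (EReal.coe_toReal hgt (hGbot z)).symm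
  have hφx : φ x = m + g := by
    rw [hMdl, hg, ← EReal.coe_add] at hmin
    exact EReal.coe_eq_coe_iff.mp hmin
  -- the descent estimate, summed over blocks
  have hD : |Fsum f z - (Fsum f x + (N : ℝ)⁻¹ * ∑ i, ⟪f' i (x i), z i - x i⟫)|
      ≤ 2⁻¹ * ∑ i, (L i / (N : ℝ)) * ‖z i - x i‖ ^ 2 := by
    have h1 : Fsum f z - (Fsum f x + (N : ℝ)⁻¹ * ∑ i, ⟪f' i (x i), z i - x i⟫)
        = (N : ℝ)⁻¹ * ∑ i, (f i (z i) - f i (x i) - ⟪f' i (x i), z i - x i⟫) := by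
      simp only [Fsum, Finset.sum_sub_distrib]
      ring
    rw [h1, abs_mul, abs_of_nonneg (by positivity : (0:ℝ) ≤ (N : ℝ)⁻¹)]
    have h2 : |∑ i, (f i (z i) - f i (x i) - ⟪f' i (x i), z i - x i⟫)|
        ≤ ∑ i, (L i / 2 * ‖z i - x i‖ ^ 2) := by
      refine (Finset.abs_sum_le_sum_abs _ _).trans (Finset.sum_le_sum fun i _ => ?_)
      exact descent_lemma (f i) (f' i) (L i) (hL i) (hf i) (hlip i) (x i) (z i)
    calc (N : ℝ)⁻¹ * |∑ i, (f i (z i) - f i (x i) - ⟪f' i (x i), z i - x i⟫)|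
        ≤ (N : ℝ)⁻¹ * ∑ i, (L i / 2 * ‖z i - x i‖ ^ 2) := by
          gcongr
      _ = 2⁻¹ * ∑ i, (L i / (N : ℝ)) * ‖z i - x i‖ ^ 2 := by
          rw [Finset.mul_sum, Finset.mul_sum]
          exact Finset.sum_congr rfl fun i _ => by ring
    -- end hD
  obtain ⟨hD1, hD2⟩ := abs_le.mp hD
  have hPhi : Phi f G z = ((Fsum f z + g : ℝ) : EReal) := by
    rw [Phi, hg, ← EReal.coe_add]
  have hsum1 : ∑ i, ((γ i)⁻¹ - L i / (N : ℝ)) * ‖z i - x i‖ ^ 2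
      = ∑ i, (γ i)⁻¹ * ‖z i - x i‖ ^ 2 - ∑ i, (L i / (N : ℝ)) * ‖z i - x i‖ ^ 2 := by
    simp only [sub_mul, Finset.sum_sub_distrib]
  have hsum2 : ∑ i, ((γ i)⁻¹ + L i / (N : ℝ)) * ‖z i - x i‖ ^ 2
      = ∑ i, (γ i)⁻¹ * ‖z i - x i‖ ^ 2 + ∑ i, (L i / (N : ℝ)) * ‖z i - x i‖ ^ 2 := by
    simp only [add_mul, Finset.sum_add_distrib]
  constructor
  · rw [hPhi, ← EReal.coe_add, EReal.coe_le_coe_iff, hφx, hm, hsum1]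
    linarith
  · rw [hPhi, ← EReal.coe_add, EReal.coe_le_coe_iff, hφx, hm, hsum2]
    linarith
end
end

section
/- Along the iterates of the block-coordinate forward-backward algorithm with arbitrary index selection: (i) the sequence (φ_Γ(x^k)) monotonically decreases to a finite value Φ* ≥ min Φ; (ii) φ_Γ is constant and equal to Φ* on the set of accumulation points of (x^k); (iii) the sequence (‖x^{k+1} − x^k‖²) is summable, and in particular ‖x^{k+1} − x^k‖ → 0. -/
open Filter Topology Metric Bornology Set
open scoped RealInnerProductSpace

noncomputable section

variable {N : ℕ} {E : Fin N → Type*}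
  [∀ i, NormedAddCommGroup (E i)] [∀ i, InnerProductSpace ℝ (E i)]
  [∀ i, CompleteSpace (E i)]

set_option maxHeartbeats 1000000
set_option synthInstance.maxHeartbeats 400000

def qcoord (f : ∀ i, E i → ℝ) (f' : ∀ i, E i → E i) (γ : Fin N → ℝ)
    (i : Fin N) (a b : E i) : ℝ :=
  (N : ℝ)⁻¹ * f i b + (N : ℝ)⁻¹ * ⟪f' i b, a - b⟫ + 2⁻¹ * ((γ i)⁻¹ * ‖a - b‖ ^ 2)

lemma Mdl_eq_qsum (f : ∀ i, E i → ℝ) (f' : ∀ i, E i → E i) (γ : Fin N → ℝ)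
    (G : PiLp 2 E → EReal) (w x : PiLp 2 E) :
    Mdl f f' γ G w x = ((∑ i, qcoord f f' γ i (w i) (x i) : ℝ) : EReal) + G w := by
  unfold Mdl qcoord Fsum
  congr 1
  rw [EReal.coe_eq_coe_iff, Finset.sum_add_distrib, Finset.sum_add_distrib,
    ← Finset.mul_sum, ← Finset.mul_sum, ← Finset.mul_sum]

lemma lipschitz_quad_bound {X : Type*} [NormedAddCommGroup X] [InnerProductSpace ℝ X]
    [CompleteSpace X]
    {f : X → ℝ} {f' : X → X} {L : ℝ}
    (hf : ∀ u, HasGradientAt f (f' u) u) (hL : 0 ≤ L)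
    (hlip : ∀ u v, ‖f' u - f' v‖ ≤ L * ‖u - v‖) (u v : X) :
    |f v - f u - ⟪f' u, v - u⟫| ≤ L / 2 * ‖v - u‖ ^ 2 := by
  set d := v - u with hd
  have hcontf' : Continuous f' := by
    have : LipschitzWith L.toNNReal f' := by
      intro a b
      rw [edist_nndist, edist_nndist, ← ENNReal.coe_mul, ENNReal.coe_le_coe, ← NNReal.coe_le_coe]
      push_cast
      calc (nndist (f' a) (f' b) : ℝ) = ‖f' a - f' b‖ := by rw [coe_nndist, dist_eq_norm]
        _ ≤ L * ‖a - b‖ := hlip a b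
        _ ≤ L.toNNReal * (nndist a b : ℝ) := by
            rw [coe_nndist, dist_eq_norm]
            exact mul_le_mul_of_nonneg_right (Real.le_coe_toNNReal L) (norm_nonneg _)
    exact this.continuous
  have hline : ∀ t : ℝ, HasDerivAt (fun t : ℝ => u + t • d) d t := by
    intro t
    simpa using ((hasDerivAt_id t).smul_const d).const_add u
  have hg : ∀ t : ℝ, HasDerivAt (fun t : ℝ => f (u + t • d))
      ⟪f' (u + t • d), d⟫ t := by
    intro t
    have h1 := ((hf (u + t • d)).hasFDerivAt).comp_hasDerivAt t (hline t)
    simp only [InnerProductSpace.toDual_apply_apply] at h1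
    exact h1
  have hcontg' : Continuous fun t : ℝ => ⟪f' (u + t • d), d⟫ - ⟪f' u, d⟫ := by
    have h1 : Continuous fun t : ℝ => u + t • d := by continuity
    exact ((hcontf'.comp h1).inner continuous_const).sub continuous_const
  have key : f v - f u - ⟪f' u, d⟫
      = ∫ t in (0:ℝ)..1, (⟪f' (u + t • d), d⟫ - ⟪f' u, d⟫) := by
    have hder : ∀ t ∈ Set.uIcc (0:ℝ) 1, HasDerivAt (fun t : ℝ => f (u + t • d) - t * ⟪f' u, d⟫)
        (⟪f' (u + t • d), d⟫ - ⟪f' u, d⟫) t := by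
      intro t _
      exact (hg t).sub ((hasDerivAt_id t).mul_const _ |>.congr_deriv (by ring))
    have h2 := intervalIntegral.integral_eq_sub_of_hasDerivAt hder
      (hcontg'.intervalIntegrable _ _)
    simp [hd] at h2
    linarith
  rw [key, ← Real.norm_eq_abs]
  have hb : ∀ t ∈ Set.uIoc (0:ℝ) 1, ‖⟪f' (u + t • d), d⟫ - ⟪f' u, d⟫‖ ≤ L * ‖d‖^2 * t := by
    intro t ht
    rw [Set.uIoc_of_le zero_le_one] at ht
    calc ‖⟪f' (u + t • d), d⟫ - ⟪f' u, d⟫‖ = |⟪f' (u + t • d) - f' u, d⟫| := by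
          rw [inner_sub_left]; rfl
      _ ≤ ‖f' (u + t • d) - f' u‖ * ‖d‖ := abs_real_inner_le_norm _ _
      _ ≤ (L * ‖(u + t • d) - u‖) * ‖d‖ :=
          mul_le_mul_of_nonneg_right (hlip _ _) (norm_nonneg _)
      _ = L * ‖d‖^2 * t := by
          rw [add_sub_cancel_left, norm_smul, Real.norm_eq_abs, abs_of_pos ht.1]
          ring
  calc ‖∫ t in (0:ℝ)..1, (⟪f' (u + t • d), d⟫ - ⟪f' u, d⟫)‖
      ≤ |∫ t in (0:ℝ)..1, L * ‖d‖^2 * t| := by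
        apply intervalIntegral.norm_integral_le_abs_of_norm_le
        · exact (MeasureTheory.ae_restrict_iff' measurableSet_uIoc).2 (Filter.Eventually.of_forall hb)
        · exact ((continuous_const.mul continuous_id).intervalIntegrable _ _)
    _ = L / 2 * ‖d‖ ^ 2 := by
        rw [intervalIntegral.integral_const_mul, integral_id, abs_of_nonneg (by positivity)]
        ring

lemma coord_diff_bound {X : Type*} [NormedAddCommGroup X] [InnerProductSpace ℝ X]
    [CompleteSpace X]
    {f : X → ℝ} {f' : X → X} {L : ℝ}
    (hf : ∀ u, HasGradientAt f (f' u) u) (hL : 0 ≤ L)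
    (hlip : ∀ u v, ‖f' u - f' v‖ ≤ L * ‖u - v‖)
    {ν g B t : ℝ} (hν : 0 ≤ ν) (hg : 0 ≤ g) (hB : 0 ≤ B)
    (pi xi a : X) (ha : ‖a - xi‖ ≤ B) (hxp : ‖xi - pi‖ ≤ t) (ht1 : t ≤ 1) :
    |(ν * f pi + ν * ⟪f' pi, a - pi⟫ + g * ‖a - pi‖ ^ 2)
      - (ν * f xi + ν * ⟪f' xi, a - xi⟫ + g * ‖a - xi‖ ^ 2)|
      ≤ (ν * (2 * ‖f' pi‖ + L * (B + 3)) + g * (2 * B + 1)) * t := by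
  have ht0 : 0 ≤ t := le_trans (norm_nonneg _) hxp
  have hd2 : ‖xi - pi‖ ^ 2 ≤ t ^ 2 := by nlinarith [norm_nonneg (xi - pi)]
  have ht2 : t ^ 2 ≤ t := by nlinarith
  have hapi : ‖a - pi‖ ≤ B + 1 := by
    have h := norm_add_le (a - xi) (xi - pi)
    rw [show a - xi + (xi - pi) = a - pi by abel] at h
    linarith
  -- e1
  have e1 : |f pi - f xi| ≤ (‖f' pi‖ + L / 2) * t := by
    have h1 := abs_le.1 (lipschitz_quad_bound hf hL hlip pi xi)
    have h2' := abs_le.1 ((abs_real_inner_le_norm (f' pi) (xi - pi)).trans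
      (mul_le_mul_of_nonneg_left hxp (norm_nonneg (f' pi))))
    have h3 : L / 2 * ‖xi - pi‖ ^ 2 ≤ L / 2 * t ^ 2 :=
      mul_le_mul_of_nonneg_left hd2 (by linarith)
    rw [abs_le]
    constructor <;> nlinarith [norm_nonneg (f' pi), h2'.1, h2'.2, h1.1, h1.2]
  -- e2
  have hdecomp : ⟪f' pi, a - pi⟫ - ⟪f' xi, a - xi⟫
      = ⟪f' pi - f' xi, a - pi⟫ + ⟪f' xi, xi - pi⟫ := by
    simp only [show a - xi = (a - pi) - (xi - pi) from by abel, inner_sub_left,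
      inner_sub_right]
    ring
  have e2 : |⟪f' pi, a - pi⟫ - ⟪f' xi, a - xi⟫| ≤ (‖f' pi‖ + L * (B + 2)) * t := by
    rw [hdecomp]
    have h4 : |⟪f' pi - f' xi, a - pi⟫| ≤ L * t * (B + 1) := by
      refine (abs_real_inner_le_norm _ _).trans ?_
      have h5 : ‖f' pi - f' xi‖ ≤ L * t := (hlip pi xi).trans (by
        rw [norm_sub_rev]
        exact mul_le_mul_of_nonneg_left hxp hL)
      calc ‖f' pi - f' xi‖ * ‖a - pi‖ ≤ (L * t) * (B + 1) := by
            apply mul_le_mul h5 hapi (norm_nonneg _) (by positivity)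
        _ = L * t * (B + 1) := rfl
    have h6 : |⟪f' xi, xi - pi⟫| ≤ (‖f' pi‖ + L) * t := by
      refine (abs_real_inner_le_norm _ _).trans ?_
      have h7 : ‖f' xi‖ ≤ ‖f' pi‖ + L := by
        have h8 := norm_add_le (f' pi) (f' xi - f' pi)
        rw [show f' pi + (f' xi - f' pi) = f' xi by abel] at h8
        have h9 := (hlip xi pi).trans (mul_le_mul_of_nonneg_left (hxp.trans ht1) hL)
        linarith
      exact mul_le_mul h7 hxp (norm_nonneg _) (by positivity)
    calc |⟪f' pi - f' xi, a - pi⟫ + ⟪f' xi, xi - pi⟫|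
        ≤ |⟪f' pi - f' xi, a - pi⟫| + |⟪f' xi, xi - pi⟫| := abs_add_le _ _
      _ ≤ L * t * (B + 1) + (‖f' pi‖ + L) * t := add_le_add h4 h6
      _ = (‖f' pi‖ + L * (B + 2)) * t := by ring
  -- e3
  have hn : |‖a - pi‖ - ‖a - xi‖| ≤ t := by
    have h := abs_norm_sub_norm_le (a - pi) (a - xi)
    rw [show a - pi - (a - xi) = xi - pi by abel] at h
    exact h.trans hxp
  have e3 : |‖a - pi‖ ^ 2 - ‖a - xi‖ ^ 2| ≤ (2 * B + 1) * t := by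
    have hn' := abs_le.1 hn
    rw [abs_le]
    constructor <;> nlinarith [norm_nonneg (a - pi), norm_nonneg (a - xi)]
  -- combine
  have key : (ν * f pi + ν * ⟪f' pi, a - pi⟫ + g * ‖a - pi‖ ^ 2)
      - (ν * f xi + ν * ⟪f' xi, a - xi⟫ + g * ‖a - xi‖ ^ 2)
      = ν * (f pi - f xi) + ν * (⟪f' pi, a - pi⟫ - ⟪f' xi, a - xi⟫)
        + g * (‖a - pi‖ ^ 2 - ‖a - xi‖ ^ 2) := by ring
  rw [key]
  calc |ν * (f pi - f xi) + ν * (⟪f' pi, a - pi⟫ - ⟪f' xi, a - xi⟫)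
        + g * (‖a - pi‖ ^ 2 - ‖a - xi‖ ^ 2)|
      ≤ |ν * (f pi - f xi) + ν * (⟪f' pi, a - pi⟫ - ⟪f' xi, a - xi⟫)|
        + |g * (‖a - pi‖ ^ 2 - ‖a - xi‖ ^ 2)| := abs_add_le _ _
    _ ≤ |ν * (f pi - f xi)| + |ν * (⟪f' pi, a - pi⟫ - ⟪f' xi, a - xi⟫)|
        + |g * (‖a - pi‖ ^ 2 - ‖a - xi‖ ^ 2)| := by linarith [abs_add_le (ν * (f pi - f xi)) (ν * (⟪f' pi, a - pi⟫ - ⟪f' xi, a - xi⟫))]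
    _ ≤ ν * ((‖f' pi‖ + L / 2) * t) + ν * ((‖f' pi‖ + L * (B + 2)) * t)
        + g * ((2 * B + 1) * t) := by
        rw [abs_mul, abs_mul, abs_mul, abs_of_nonneg hν, abs_of_nonneg hg]
        exact add_le_add (add_le_add (mul_le_mul_of_nonneg_left e1 hν)
          (mul_le_mul_of_nonneg_left e2 hν)) (mul_le_mul_of_nonneg_left e3 hg)
    _ ≤ (ν * (2 * ‖f' pi‖ + L * (B + 3)) + g * (2 * B + 1)) * t := by nlinarith [mul_nonneg hν ht0, mul_nonneg (mul_nonneg hν hL) ht0]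

/-- Lemma 3.2(ii)-(iv): along BC iterates with arbitrary index selection,
(φ_Γ(x^k)) decreases monotonically to a finite value Φ* ≥ min Φ, φ_Γ ≡ Φ* on the set of
accumulation points of (x^k), and (‖x^{k+1}-x^k‖²) is summable (hence vanishes). -/
theorem bc_fbe_decreases_cluster_constant_summable
    (f : ∀ i, E i → ℝ) (f' : ∀ i, E i → E i) (L γ : Fin N → ℝ)
    (G : PiLp 2 E → EReal)
    (hf : ∀ i (u : E i), HasGradientAt (f i) (f' i u) u)
    (hL : ∀ i, 0 ≤ L i)
    (hlip : ∀ i (u v : E i), ‖f' i u - f' i v‖ ≤ L i * ‖u - v‖)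
    (hγ : ∀ i, 0 < γ i) (hγL : ∀ i, γ i * L i < (N : ℝ))
    (hGlsc : LowerSemicontinuous G)
    (hGproper : ∃ w, G w ≠ ⊤) (hGbot : ∀ w, G w ≠ ⊥)
    (hargmin : ∃ xs : PiLp 2 E, ∀ w, Phi f G xs ≤ Phi f G w)
    (φ : PiLp 2 E → ℝ)
    (hφ : ∀ x, ((φ x : ℝ) : EReal) = ⨅ w, Mdl f f' γ G w x)
    (x z : ℕ → PiLp 2 E) (I : ℕ → Finset (Fin N))
    (hz : ∀ k, z k ∈ Tmap f f' γ G (x k))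
    (hup : ∀ (k : ℕ) (i : Fin N), x (k + 1) i = if i ∈ I (k + 1) then z k i else x k i)
    :
    ∃ Φstar : ℝ,
      (∀ k, φ (x (k + 1)) ≤ φ (x k)) ∧
      Tendsto (fun k => φ (x k)) atTop (𝓝 Φstar) ∧
      (∀ xs : PiLp 2 E, (∀ w, Phi f G xs ≤ Phi f G w) → Phi f G xs ≤ ((Φstar : ℝ) : EReal)) ∧
      (∀ p : PiLp 2 E, MapClusterPt p atTop x → φ p = Φstar) ∧
      Summable (fun k => ‖x (k + 1) - x k‖ ^ 2) ∧
      Tendsto (fun k => ‖x (k + 1) - x k‖) atTop (𝓝 0) := by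
  
  classical
  -- abbreviations
  set Q : PiLp 2 E → PiLp 2 E → ℝ := fun w x' => ∑ i, qcoord f f' γ i (w i) (x' i) with hQ
  have hM : ∀ w x', Mdl f f' γ G w x' = ((Q w x' : ℝ) : EReal) + G w :=
    fun w x' => Mdl_eq_qsum f f' γ G w x'
  -- positivity of the curvature gaps
  have hc : ∀ i, 0 < (γ i)⁻¹ - L i * (N : ℝ)⁻¹ := by
    intro i
    have hN : (0:ℝ) < (N : ℝ) := by exact_mod_cast i.pos
    rw [sub_pos, ← div_eq_mul_inv, div_lt_iff₀ hN, inv_mul_eq_div, lt_div_iff₀ (hγ i)]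
    linarith [hγL i]
  obtain ⟨δ, hδpos, hδle⟩ : ∃ δ : ℝ, 0 < δ ∧ ∀ i, δ ≤ (γ i)⁻¹ - L i * (N : ℝ)⁻¹ := by
    rcases isEmpty_or_nonempty (Fin N) with he | hne
    · exact ⟨1, one_pos, fun i => (he.false i).elim⟩
    · refine ⟨Finset.univ.inf' (Finset.univ_nonempty) (fun i => (γ i)⁻¹ - L i * (N : ℝ)⁻¹),
        ?_, fun i => Finset.inf'_le _ (Finset.mem_univ i)⟩
      exact (Finset.lt_inf'_iff _).2 fun i _ => hc i
  have hNinv : (0:ℝ) ≤ (N : ℝ)⁻¹ := by positivity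
  -- per-coordinate quadratic bounds
  have hquad : ∀ i (u v : E i), |f i v - f i u - ⟪f' i u, v - u⟫| ≤ L i / 2 * ‖v - u‖ ^ 2 :=
    fun i => lipschitz_quad_bound (hf i) (hL i) (hlip i)
  -- G (z k) is finite
  obtain ⟨w0, hw0⟩ := hGproper
  have hGzfin : ∀ k, ∃ r : ℝ, G (z k) = (r : EReal) := by
    intro k
    have h1 : Mdl f f' γ G (z k) (x k) ≤ Mdl f f' γ G w0 (x k) := hz k w0
    have h2 : Mdl f f' γ G w0 (x k) ≠ ⊤ := by
      rw [hM]
      lift G w0 to ℝ using ⟨hw0, hGbot w0⟩ with s hs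
      rw [← EReal.coe_add]; exact EReal.coe_ne_top _
    have h3 : Mdl f f' γ G (z k) (x k) ≠ ⊤ := ne_top_of_le_ne_top h2 h1
    rw [hM] at h3
    have h4 : G (z k) ≠ ⊤ := by
      intro h; rw [h, EReal.add_top_of_ne_bot (EReal.coe_ne_bot _)] at h3; exact h3 rfl
    exact ⟨(G (z k)).toReal, (EReal.coe_toReal h4 (hGbot _)).symm⟩
  choose r hr using hGzfin
  -- φ along iterates and the basic inequality φ x' ≤ Q (z k) x' + r k
  have hφle : ∀ (x' w : PiLp 2 E), ((φ x' : ℝ) : EReal) ≤ Mdl f f' γ G w x' := by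
    intro x' w; rw [hφ]; exact iInf_le _ w
  have hφleR : ∀ (x' : PiLp 2 E) (k : ℕ), φ x' ≤ Q (z k) x' + r k := by
    intro x' k
    have := hφle x' (z k)
    rw [hM, hr, ← EReal.coe_add, EReal.coe_le_coe_iff] at this
    exact this
  have hφeq : ∀ k, φ (x k) = Q (z k) (x k) + r k := by
    intro k
    have h1 : ((φ (x k) : ℝ) : EReal) = Mdl f f' γ G (z k) (x k) := by
      rw [hφ]
      exact le_antisymm (iInf_le _ _) (le_iInf (hz k))
    rw [hM, hr, ← EReal.coe_add, EReal.coe_eq_coe_iff] at h1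
    exact h1
  -- norms of updates
  have hnorm_sq : ∀ k, ‖x (k+1) - x k‖ ^ 2
      = ∑ i, (if i ∈ I (k+1) then ‖z k i - x k i‖ ^ 2 else 0) := by
    intro k
    rw [PiLp.norm_sq_eq_of_L2]
    refine Finset.sum_congr rfl fun i _ => ?_
    have : (x (k+1) - x k) i = x (k+1) i - x k i := rfl
    rw [this, hup k i]
    by_cases h : i ∈ I (k+1) <;> simp [h]
  -- sufficient decrease
  have hdesc : ∀ k, φ (x (k+1)) + δ/2 * ‖x (k+1) - x k‖ ^ 2 ≤ φ (x k) := by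
    intro k
    have h1 : φ (x (k+1)) ≤ Q (z k) (x (k+1)) + r k := hφleR _ k
    have h2 : Q (z k) (x (k+1)) + δ/2 * ‖x (k+1) - x k‖ ^ 2 ≤ Q (z k) (x k) := by
      rw [hnorm_sq k]
      simp only [hQ]
      rw [Finset.mul_sum, ← Finset.sum_add_distrib]
      refine Finset.sum_le_sum fun i _ => ?_
      rw [hup k i]
      by_cases hi : i ∈ I (k+1)
      · simp only [hi, if_true]
        have hq := (abs_le.1 (hquad i (x k i) (z k i))).2
        have hci : 0 ≤ ((γ i)⁻¹ - L i * (N:ℝ)⁻¹ - δ) * ‖z k i - x k i‖ ^ 2 :=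
          mul_nonneg (by linarith [hδle i]) (by positivity)
        have hmul := mul_le_mul_of_nonneg_left hq hNinv
        unfold qcoord
        simp only [sub_self, inner_zero_right, norm_zero]
        nlinarith [hmul, hci]
      · simp [hi]
    linarith [hφeq k]
  -- lower bound via any minimizer
  have hlow : ∀ xs' : PiLp 2 E, (∀ w, Phi f G xs' ≤ Phi f G w) →
      ∃ m : ℝ, Phi f G xs' = (m : EReal) ∧ ∀ x' : PiLp 2 E, m ≤ φ x' := by
    intro xs' hxs'
    have hbot : Phi f G xs' ≠ ⊥ := by
      unfold Phi
      intro h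
      rcases EReal.add_eq_bot_iff.1 h with h' | h'
      · exact EReal.coe_ne_bot _ h'
      · exact hGbot _ h'
    have htop : Phi f G xs' ≠ ⊤ := by
      have h1 : Phi f G xs' ≤ Phi f G w0 := hxs' w0
      have h2 : Phi f G w0 ≠ ⊤ := by
        unfold Phi
        lift G w0 to ℝ using ⟨hw0, hGbot w0⟩ with s hs
        rw [← EReal.coe_add]
        exact EReal.coe_ne_top _
      exact ne_top_of_le_ne_top h2 h1
    refine ⟨(Phi f G xs').toReal, (EReal.coe_toReal htop hbot).symm, ?_⟩
    intro x'
    have key : ∀ w, Phi f G xs' ≤ Mdl f f' γ G w x' := by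
      intro w
      refine (hxs' w).trans ?_
      rw [hM]
      unfold Phi
      refine add_le_add_left ?_ (G w)
      rw [EReal.coe_le_coe_iff]
      unfold Fsum
      simp only [hQ]
      rw [Finset.mul_sum]
      refine Finset.sum_le_sum fun i _ => ?_
      have hq := (abs_le.1 (hquad i (x' i) (w i))).2
      have hci : 0 ≤ ((γ i)⁻¹ - L i * (N:ℝ)⁻¹) * ‖w i - x' i‖ ^ 2 :=
        mul_nonneg (le_of_lt (hc i)) (by positivity)
      have hmul := mul_le_mul_of_nonneg_left hq hNinv
      unfold qcoord
      nlinarith [hmul, hci]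
    have h3 : Phi f G xs' ≤ ((φ x' : ℝ) : EReal) := by
      rw [hφ]
      exact le_iInf key
    have h4 : ((Phi f G xs').toReal : EReal) ≤ ((φ x' : ℝ) : EReal) := by
      rw [EReal.coe_toReal htop hbot]
      exact h3
    exact EReal.coe_le_coe_iff.1 h4
  obtain ⟨xs, hxs⟩ := hargmin
  obtain ⟨m, hmeq, hm⟩ := hlow xs hxs
  -- monotone limit
  have hmono : ∀ k, φ (x (k+1)) ≤ φ (x k) := by
    intro k
    have h0 : (0:ℝ) ≤ δ/2 * ‖x (k+1) - x k‖ ^ 2 := by positivity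
    linarith [hdesc k]
  have hanti : Antitone fun k => φ (x k) := antitone_nat_of_succ_le hmono
  have hbdd : BddBelow (Set.range fun k => φ (x k)) := by
    refine ⟨m, ?_⟩; rintro _ ⟨k, rfl⟩; exact hm (x k)
  set Φstar := ⨅ k, φ (x k) with hΦstar
  have htend : Tendsto (fun k => φ (x k)) atTop (𝓝 Φstar) := tendsto_atTop_ciInf hanti hbdd
  have hΦlek : ∀ k, Φstar ≤ φ (x k) := fun k => ciInf_le hbdd k
  -- summability
  have hpartial : ∀ n, δ/2 * ∑ k ∈ Finset.range n, ‖x (k+1) - x k‖ ^ 2 ≤ φ (x 0) - φ (x n) := by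
    intro n
    induction n with
    | zero => simp
    | succ n ih =>
      rw [Finset.sum_range_succ, mul_add]
      linarith [hdesc n]
  have hsummable : Summable fun k => ‖x (k+1) - x k‖ ^ 2 := by
    apply summable_of_sum_range_le (c := (φ (x 0) - m) / (δ/2)) (fun n => by positivity)
    intro n
    rw [le_div_iff₀ (by positivity : (0:ℝ) < δ/2)]
    have h := hpartial n
    rw [mul_comm] at h
    linarith [hm (x n)]
  have hto0 : Tendsto (fun k => ‖x (k+1) - x k‖) atTop (𝓝 0) := by
    have h1 := hsummable.tendsto_atTop_zero
    have h2 := h1.sqrt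
    rw [Real.sqrt_zero] at h2
    refine h2.congr fun k => ?_
    exact Real.sqrt_sq (norm_nonneg _)
  -- cluster points
  have hcoordle : ∀ (u : PiLp 2 E) (i : Fin N), ‖u i‖ ≤ ‖u‖ := by
    intro u i
    have h1 : ‖u i‖ ^ 2 ≤ ‖u‖ ^ 2 := by
      rw [PiLp.norm_sq_eq_of_L2]
      exact Finset.single_le_sum (f := fun j => ‖u j‖ ^ 2) (fun j _ => by positivity)
        (Finset.mem_univ i)
    nlinarith [norm_nonneg (u i), norm_nonneg u]
  have hcluster : ∀ p : PiLp 2 E, MapClusterPt p atTop x → φ p = Φstar := by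
    have hcont_coord : ∀ i, Continuous fun u : PiLp 2 E => u i := by
      intro i
      refine (LipschitzWith.of_dist_le_mul (K := 1) ?_).continuous
      intro u v
      rw [NNReal.coe_one, one_mul, dist_eq_norm, dist_eq_norm]
      exact hcoordle (u - v) i
    have hcontf : ∀ i, Continuous (f i) :=
      fun i => continuous_iff_continuousAt.2 fun u => (hf i u).differentiableAt.continuousAt
    have hcontf' : ∀ i, Continuous (f' i) := by
      intro i
      refine (LipschitzWith.of_dist_le_mul (K := (L i).toNNReal) ?_).continuous
      intro u v
      rw [Real.coe_toNNReal _ (hL i), dist_eq_norm, dist_eq_norm]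
      exact hlip i u v
    have hqcont : ∀ i (a : E i), Continuous fun b => qcoord f f' γ i a b := by
      intro i a
      unfold qcoord
      have h1 : Continuous fun b : E i => ⟪f' i b, a - b⟫ :=
        (hcontf' i).inner (continuous_const.sub continuous_id)
      have h2 : Continuous fun b : E i => ‖a - b‖ ^ 2 :=
        ((continuous_const.sub continuous_id).norm).pow 2
      exact ((continuous_const.mul (hcontf i)).add (continuous_const.mul h1)).add
        (continuous_const.mul (continuous_const.mul h2))
    intro p hp
    obtain ⟨ψ, hψmono, hxψ⟩ := TopologicalSpace.FirstCountableTopology.tendsto_subseq hp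
    have hφψ : Tendsto (fun j => φ (x (ψ j))) atTop (𝓝 Φstar) :=
      htend.comp hψmono.tendsto_atTop
    have hxψi : ∀ i, Tendsto (fun j => x (ψ j) i) atTop (𝓝 (p i)) :=
      fun i => ((hcont_coord i).continuousAt.tendsto).comp hxψ
    -- direction 1 : Φstar ≤ φ p
    have hdir1 : Φstar ≤ φ p := by
      have key : ∀ w, ((Φstar : ℝ) : EReal) ≤ Mdl f f' γ G w p := by
        intro w
        by_cases hw : G w = ⊤
        · rw [hM, hw, EReal.add_top_of_ne_bot (EReal.coe_ne_bot _)]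
          exact le_top
        · lift G w to ℝ using ⟨hw, hGbot w⟩ with s hs
          have hQtend : Tendsto (fun j => Q w (x (ψ j)) + s) atTop (𝓝 (Q w p + s)) :=
            Tendsto.add_const s (tendsto_finset_sum _ fun i _ =>
              ((hqcont i (w i)).continuousAt.tendsto).comp (hxψi i))
          have hle : ∀ j, φ (x (ψ j)) ≤ Q w (x (ψ j)) + s := by
            intro j
            have h1 := hφle (x (ψ j)) w
            rw [hM, ← hs, ← EReal.coe_add, EReal.coe_le_coe_iff] at h1
            exact h1
          have h2 := le_of_tendsto_of_tendsto' hφψ hQtend hle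
          rw [hM, ← hs, ← EReal.coe_add]
          exact EReal.coe_le_coe_iff.2 h2
      have h1 : ((Φstar : ℝ) : EReal) ≤ ((φ p : ℝ) : EReal) := by
        rw [hφ]
        exact le_iInf key
      exact EReal.coe_le_coe_iff.1 h1
    -- direction 2 : φ p ≤ Φstar
    have hdir2 : φ p ≤ Φstar := by
      have hzx : ∀ k, δ/2 * ‖z k - x k‖ ^ 2 ≤ φ (x 0) - m := by
        intro k
        have h1 : Fsum f (z k) + δ/2 * ‖z k - x k‖ ^ 2 ≤ Q (z k) (x k) := by
          rw [PiLp.norm_sq_eq_of_L2]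
          unfold Fsum
          simp only [hQ]
          rw [Finset.mul_sum, Finset.mul_sum, ← Finset.sum_add_distrib]
          refine Finset.sum_le_sum fun i _ => ?_
          have hq := (abs_le.1 (hquad i (x k i) (z k i))).2
          have hci : 0 ≤ ((γ i)⁻¹ - L i * (N:ℝ)⁻¹ - δ) * ‖z k i - x k i‖ ^ 2 :=
            mul_nonneg (by linarith [hδle i]) (by positivity)
          have hmul := mul_le_mul_of_nonneg_left hq hNinv
          have hsub : (z k - x k) i = z k i - x k i := rfl
          rw [hsub]
          unfold qcoord
          nlinarith [hmul, hci]
        have h2 : m ≤ Fsum f (z k) + r k := by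
          have h3 : Phi f G xs ≤ Phi f G (z k) := hxs (z k)
          rw [hmeq] at h3
          unfold Phi at h3
          rw [hr, ← EReal.coe_add, EReal.coe_le_coe_iff] at h3
          exact h3
        have h4 := hφeq k
        have h5 : φ (x k) ≤ φ (x 0) := hanti (Nat.zero_le k)
        linarith
      have hB2nn : 0 ≤ φ (x 0) - m := le_trans (by positivity) (hzx 0)
      set B := Real.sqrt ((φ (x 0) - m) / (δ/2)) with hBdef
      have hBnn : 0 ≤ B := Real.sqrt_nonneg _
      have hBsq : B ^ 2 = (φ (x 0) - m) / (δ/2) :=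
        Real.sq_sqrt (div_nonneg hB2nn (by positivity))
      have hzxB : ∀ k i, ‖z k i - x k i‖ ≤ B := by
        intro k i
        have hsub : (z k - x k) i = z k i - x k i := rfl
        have h3 : ‖z k i - x k i‖ ^ 2 ≤ ‖z k - x k‖ ^ 2 := by
          have h := hcoordle (z k - x k) i
          rw [hsub] at h
          nlinarith [norm_nonneg (z k i - x k i), norm_nonneg (z k - x k)]
        have h2 := hzx k
        have h4 : ‖z k i - x k i‖ ^ 2 ≤ B ^ 2 := by
          rw [hBsq, le_div_iff₀ (by positivity : (0:ℝ) < δ/2)]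
          nlinarith
        nlinarith [norm_nonneg (z k i - x k i)]
      set K := ∑ i, ((N:ℝ)⁻¹ * (2 * ‖f' i (p i)‖ + L i * (B + 3))
          + 2⁻¹ * (γ i)⁻¹ * (2 * B + 1)) with hKdef
      have hΔbound : ∀ k, ‖x k - p‖ ≤ 1 →
          |Q (z k) p - Q (z k) (x k)| ≤ K * ‖x k - p‖ := by
        intro k hk1
        simp only [hQ, hKdef]
        rw [← Finset.sum_sub_distrib, Finset.sum_mul]
        refine (Finset.abs_sum_le_sum_abs _ _).trans (Finset.sum_le_sum fun i _ => ?_)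
        have hxpi : ‖x k i - p i‖ ≤ ‖x k - p‖ := by
          have h := hcoordle (x k - p) i
          exact h
        have hcd := coord_diff_bound (hf i) (hL i) (hlip i)
          (ν := (N:ℝ)⁻¹) (g := 2⁻¹ * (γ i)⁻¹) hNinv
          (mul_nonneg (by norm_num) (inv_nonneg.2 (hγ i).le)) hBnn
          (p i) (x k i) (z k i) (hzxB k i) hxpi hk1
        have heq : qcoord f f' γ i (z k i) (p i) - qcoord f f' γ i (z k i) (x k i)
            = ((N:ℝ)⁻¹ * f i (p i) + (N:ℝ)⁻¹ * ⟪f' i (p i), z k i - p i⟫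
                + 2⁻¹ * (γ i)⁻¹ * ‖z k i - p i‖ ^ 2)
              - ((N:ℝ)⁻¹ * f i (x k i) + (N:ℝ)⁻¹ * ⟪f' i (x k i), z k i - x k i⟫
                + 2⁻¹ * (γ i)⁻¹ * ‖z k i - x k i‖ ^ 2) := by
          unfold qcoord
          ring
        rw [heq]
        exact hcd.trans_eq (by ring)
      have htnorm : Tendsto (fun j => ‖x (ψ j) - p‖) atTop (𝓝 0) :=
        tendsto_iff_norm_sub_tendsto_zero.1 hxψ
      have hΔ : Tendsto (fun j => Q (z (ψ j)) p - Q (z (ψ j)) (x (ψ j))) atTop (𝓝 0) := by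
        apply squeeze_zero_norm' (a := fun j => K * ‖x (ψ j) - p‖)
        · filter_upwards [htnorm.eventually_le_const (by norm_num : (0:ℝ) < 1)] with j hj
          rw [Real.norm_eq_abs]
          exact hΔbound (ψ j) hj
        · simpa using htnorm.const_mul K
      have hfinal : Tendsto
          (fun j => φ (x (ψ j)) + (Q (z (ψ j)) p - Q (z (ψ j)) (x (ψ j))))
          atTop (𝓝 (Φstar + 0)) := hφψ.add hΔ
      rw [add_zero] at hfinal
      refine ge_of_tendsto hfinal (Eventually.of_forall fun j => ?_)
      have h1 := hφleR p (ψ j)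
      have h2 := hφeq (ψ j)
      linarith
    exact le_antisymm hdir2 hdir1
  refine ⟨Φstar, hmono, htend, ?_, hcluster, hsummable, hto0⟩
  intro xs' hxs'
  obtain ⟨m', hmeq', hm'⟩ := hlow xs' hxs'
  rw [hmeq', EReal.coe_le_coe_iff]
  exact le_ciInf fun k => hm' (x k)
end
end
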